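/- For the function h(z) = e^{iαz}(λ⁴ sech(z - iϖ) + (ξ²+η²)² cosh(z-iϖ) sech²(z+iϖ) - 2λ²(ξ²+η²) sech(z+iϖ) + (4ξ²η²λ²/(ξ²+η²)) sech(z+iϖ) sech²(z-iϖ)) with α = (λ²-ξ²+η²)/(2ξη), ϖ = arctan(η/ξ), and λ = ξ+iη, the residues of h at its poles z = iϖ + iπ/2 and z = -iϖ + iπ/2 are both zero. -/

import Mathlib

open Complex Real Metric

/-- Zeros of `cosh`. -/
lemma cosh_zero_char {z : ℂ} (h : Complex.cosh z = 0) :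
    ∃ k : ℤ, z = (((2 * k + 1) * (π / 2) : ℝ) : ℂ) * I := by
  rw [← Complex.cos_mul_I] at h
  obtain ⟨k, hk⟩ := Complex.cos_eq_zero_iff.mp h
  refine ⟨-k - 1, ?_⟩
  push_cast
  linear_combination (-I) * hk + z * Complex.I_sq

/-- Zeros of `sinh`. -/
lemma sinh_zero_char {z : ℂ} (h : Complex.sinh z = 0) :
    ∃ k : ℤ, z = ((k * π : ℝ) : ℂ) * I := by
  have h' : Complex.sin (z * I) = 0 := by rw [Complex.sin_mul_I, h, zero_mul]
  obtain ⟨k, hk⟩ := Complex.sin_eq_zero_iff.mp h'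
  refine ⟨-k, ?_⟩
  push_cast
  linear_combination (-I) * hk + z * Complex.I_sq

section keylemma

/-- Key lemma: if `g` is holomorphic near the closed ball, `cosh (c - w)` vanishes at the
center, and `deriv g c = 0` (zero residue), then the circle integral of
`g z * sech² (z - w)` vanishes. -/
lemma key_lemma (c w : ℂ) (R : ℝ) (hR : 0 < R) (U : Set ℂ) (hU : IsOpen U)
    (hUb : closedBall c R ⊆ U) (g : ℂ → ℂ) (hg : DifferentiableOn ℂ g U)
    (hres : deriv g c = 0) (hsc : Complex.cosh (c - w) = 0)
    (hs' : ∀ z ∈ closedBall c R, Complex.sinh (z - w) ≠ 0)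
    (hs : ∀ z ∈ closedBall c R, z ≠ c → Complex.cosh (z - w) ≠ 0) :
    ∀ ρ : ℝ, 0 < ρ → ρ < R →
      circleIntegral (fun z => g z * ((Complex.cosh (z - w))⁻¹) ^ 2) c ρ = 0 := by
  intro ρ hρ0 hρR
  have hcball : c ∈ ball c R := mem_ball_self hR
  have hgan : AnalyticOnNhd ℂ g U := hg.analyticOnNhd hU
  have hg'an : AnalyticOnNhd ℂ (deriv g) U := hgan.deriv
  have dsinh : Differentiable ℂ (fun z : ℂ => Complex.sinh (z - w)) :=
    Complex.differentiable_sinh.comp (differentiable_id.sub (differentiable_const w))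
  have dcosh : Differentiable ℂ (fun z : ℂ => Complex.cosh (z - w)) :=
    Complex.differentiable_cosh.comp (differentiable_id.sub (differentiable_const w))
  set φ : ℂ → ℂ := fun z =>
    (deriv g z * Complex.sinh (z - w) - g z * Complex.cosh (z - w)) /
      Complex.sinh (z - w) ^ 2 with hφ
  have hφc : φ c = 0 := by
    simp [hφ, hres, hsc]
  have hφd : DifferentiableOn ℂ φ (ball c R) := by
    intro z hz
    have hzU : z ∈ U := hUb (ball_subset_closedBall hz)
    have h1 : DifferentiableAt ℂ (deriv g) z :=
      (hg'an z hzU).differentiableAt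
    have h2 : DifferentiableAt ℂ g z := (hgan z hzU).differentiableAt
    exact (((h1.mul (dsinh z)).sub (h2.mul (dcosh z))).div ((dsinh z).pow 2)
      (pow_ne_zero 2 (hs' z (ball_subset_closedBall hz)))).differentiableWithinAt
  have hderiv_cosh : ∀ z : ℂ, HasDerivAt (fun y => Complex.cosh (y - w))
      (Complex.sinh (z - w)) z := by
    intro z
    simpa [Function.comp_def] using (Complex.hasDerivAt_cosh (z - w)).comp z ((hasDerivAt_id z).sub_const w)
  have hderiv_sinh : ∀ z : ℂ, HasDerivAt (fun y => Complex.sinh (y - w))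
      (Complex.cosh (z - w)) z := by
    intro z
    simpa [Function.comp_def] using (Complex.hasDerivAt_sinh (z - w)).comp z ((hasDerivAt_id z).sub_const w)
  set k : ℂ → ℂ := dslope (fun y => Complex.cosh (y - w)) c with hkdef
  have hkd : DifferentiableOn ℂ k (ball c R) :=
    (differentiableOn_dslope (isOpen_ball.mem_nhds hcball)).mpr dcosh.differentiableOn
  have hkc : k c = Complex.sinh (c - w) := by
    rw [hkdef, dslope_same]
    exact (hderiv_cosh c).deriv
  have hkne : ∀ z ∈ closedBall c R, k z ≠ 0 := by
    intro z hz
    rcases eq_or_ne z c with rfl | hne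
    · rw [hkc]; exact hs' z hz
    · rw [hkdef, dslope_of_ne _ hne, slope_def_field, hsc, sub_zero]
      exact div_ne_zero (hs z hz hne) (sub_ne_zero.2 hne)
  set ψ : ℂ → ℂ := fun z => dslope φ c z / k z with hψdef
  have hψd : DifferentiableOn ℂ ψ (ball c R) :=
    ((differentiableOn_dslope (isOpen_ball.mem_nhds hcball)).mpr hφd).div hkd
      fun z hz => hkne z (ball_subset_closedBall hz)
  -- the sphere lies in the ball
  have hsub : sphere c ρ ⊆ ball c R := sphere_subset_closedBall.trans (closedBall_subset_ball hρR)
  have hsub' : closedBall c ρ ⊆ ball c R := closedBall_subset_ball hρR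
  set G : ℂ → ℂ := fun z => g z * ((Complex.cosh (z - w))⁻¹) ^ 2 with hGdef
  set D : ℂ → ℂ := fun z => G z - ψ z with hDdef
  -- derivative step
  have hHstep : ∀ z ∈ sphere c ρ, HasDerivWithinAt
      (fun y => -(g y / (Complex.sinh (y - w) * Complex.cosh (y - w)))) (D z) (sphere c ρ) z := by
    intro z hz
    have hzb : z ∈ closedBall c R := ball_subset_closedBall (hsub hz)
    have hne : z ≠ c := by
      intro h; rw [h] at hz
      simp [mem_sphere_iff_norm] at hz
      exact hρ0.ne' hz.symm
    have hu : Complex.cosh (z - w) ≠ 0 := hs z hzb hne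
    have hv : Complex.sinh (z - w) ≠ 0 := hs' z hzb
    have hgz : HasDerivAt g (deriv g z) z :=
      ((hgan z (hUb hzb)).differentiableAt).hasDerivAt
    have hden : HasDerivAt (fun y => Complex.sinh (y - w) * Complex.cosh (y - w))
        (Complex.cosh (z - w) * Complex.cosh (z - w) +
          Complex.sinh (z - w) * Complex.sinh (z - w)) z :=
      (hderiv_sinh z).mul (hderiv_cosh z)
    have hH := ((hgz.div hden (mul_ne_zero hv hu)).neg)
    have hzc : z - c ≠ 0 := sub_ne_zero.2 hne
    have h1 : dslope φ c z = φ z / (z - c) := by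
      rw [dslope_of_ne _ hne, slope_def_field, hφc, sub_zero]
    have h2 : k z = Complex.cosh (z - w) / (z - c) := by
      rw [hkdef, dslope_of_ne _ hne, slope_def_field, hsc, sub_zero]
    have heq : -((deriv g z * (Complex.sinh (z - w) * Complex.cosh (z - w)) -
        g z * (Complex.cosh (z - w) * Complex.cosh (z - w) +
          Complex.sinh (z - w) * Complex.sinh (z - w))) /
        (Complex.sinh (z - w) * Complex.cosh (z - w)) ^ 2) = D z := by
      have h3 : ψ z = φ z / Complex.cosh (z - w) := by
        show dslope φ c z / k z = _
        rw [h1, h2]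
        rw [div_div_div_cancel_right₀]
        exact hzc
      simp only [hDdef, hGdef, h3, hφ]
      field_simp
      ring
    rw [← heq]
    exact hH.hasDerivWithinAt
  have hDzero : circleIntegral D c ρ = 0 :=
    circleIntegral.integral_eq_zero_of_hasDerivWithinAt hρ0.le hHstep
  have hψzero : circleIntegral ψ c ρ = 0 := by
    apply Complex.circleIntegral_eq_zero_of_differentiable_on_off_countable hρ0.le
      Set.countable_empty ((hψd.mono hsub').continuousOn)
    intro z hz
    exact (hψd.differentiableAt (isOpen_ball.mem_nhds (hsub' (ball_subset_closedBall hz.1))))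
  -- integrability
  have hGcont : ContinuousOn G (sphere c ρ) := by
    apply ContinuousOn.mul
    · intro z hz
      exact ((hgan z (hUb (ball_subset_closedBall (hsub hz)))).differentiableAt).continuousAt.continuousWithinAt
    · apply ContinuousOn.pow
      apply ContinuousOn.inv₀ dcosh.continuous.continuousOn
      intro z hz
      refine hs z (ball_subset_closedBall (hsub hz)) ?_
      intro h; rw [h] at hz
      simp [mem_sphere_iff_norm] at hz
      exact hρ0.ne' hz.symm
  have hψcont : ContinuousOn ψ (sphere c ρ) := (hψd.mono hsub).continuousOn
  have hGint : CircleIntegrable G c ρ := hGcont.circleIntegrable hρ0.le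
  have hψint : CircleIntegrable ψ c ρ := hψcont.circleIntegrable hρ0.le
  have hsubint := circleIntegral.integral_sub hGint hψint
  have : circleIntegral D c ρ = circleIntegral G c ρ - circleIntegral ψ c ρ := hsubint
  rw [hDzero, hψzero, sub_zero] at this
  exact this.symm


end keylemma

set_option maxHeartbeats 1000000 in
/-- The residues of the integrand `h₁` at its poles `z = ±iϖ + iπ/2` vanish:
the circle integrals of `h` around small circles centered at these poles are zero. -/
theorem residues_vanish (xi eta : ℝ) (hxi : 0 < xi) (heta : 0 < eta)
    (lam : ℂ) (hlam : lam = (xi : ℂ) + I * eta)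
    (alpha : ℂ) (halpha : alpha = (lam ^ 2 - (xi ^ 2 : ℝ) + (eta ^ 2 : ℝ)) / (2 * xi * eta))
    (vpi : ℝ) (hvpi : vpi = Real.arctan (eta / xi))
    (h : ℂ → ℂ)
    (hh : ∀ z : ℂ, h z = Complex.exp (I * alpha * z) *
        (lam ^ 4 * (Complex.cosh (z - I * vpi))⁻¹ +
          ((xi ^ 2 + eta ^ 2 : ℝ) : ℂ) ^ 2 * Complex.cosh (z - I * vpi) *
            ((Complex.cosh (z + I * vpi))⁻¹) ^ 2 -
          2 * lam ^ 2 * ((xi ^ 2 + eta ^ 2 : ℝ) : ℂ) * (Complex.cosh (z + I * vpi))⁻¹ +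
          (4 * (xi ^ 2 : ℝ) * (eta ^ 2 : ℝ) / ((xi ^ 2 + eta ^ 2 : ℝ) : ℂ)) * lam ^ 2 *
            (Complex.cosh (z + I * vpi))⁻¹ * ((Complex.cosh (z - I * vpi))⁻¹) ^ 2)) :
    ∃ r : ℝ, 0 < r ∧ ∀ ρ : ℝ, 0 < ρ → ρ < r →
      circleIntegral h (I * vpi + I * (π / 2)) ρ = 0 ∧
      circleIntegral h (-(I * vpi) + I * (π / 2)) ρ = 0 := by
  have hπ := Real.pi_pos
  have hQ : (0:ℝ) < xi ^ 2 + eta ^ 2 := by positivity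
  have hv0 : 0 < vpi := by
    rw [hvpi]
    have := Real.arctan_strictMono (show (0:ℝ) < eta / xi from div_pos heta hxi)
    rwa [Real.arctan_zero] at this
  have hvlt : vpi < π / 2 := by rw [hvpi]; exact Real.arctan_lt_pi_div_two _
  set R : ℝ := min vpi (π / 2 - vpi) with hRdef
  have hRpos : 0 < R := lt_min hv0 (by linarith)
  have hRv : R ≤ vpi := min_le_left _ _
  have hRv2 : R ≤ π / 2 - vpi := min_le_right _ _
  -- trigonometric values
  have hden : (0:ℝ) < 1 + (eta / xi) ^ 2 := by positivity
  have hsq : Real.sqrt (1 + (eta / xi) ^ 2) ^ 2 = 1 + (eta / xi) ^ 2 := Real.sq_sqrt hden.le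
  have hsqpos : 0 < Real.sqrt (1 + (eta / xi) ^ 2) := Real.sqrt_pos.mpr hden
  have hsin2 : Real.sin (2 * vpi) = 2 * xi * eta / (xi ^ 2 + eta ^ 2) := by
    have h1 : Real.sin (2 * vpi) = 2 * (eta / xi) / (1 + (eta / xi) ^ 2) := by
      rw [Real.sin_two_mul, hvpi, Real.sin_arctan, Real.cos_arctan]
      rw [mul_assoc, div_mul_div_comm, mul_one, Real.mul_self_sqrt hden.le]
      ring
    rw [h1]
    field_simp
  have hcos2 : Real.cos (2 * vpi) = (xi ^ 2 - eta ^ 2) / (xi ^ 2 + eta ^ 2) := by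
    have h1 : Real.cos (2 * vpi) = (1 - (eta / xi) ^ 2) / (1 + (eta / xi) ^ 2) := by
      rw [Real.cos_two_mul, hvpi, Real.cos_arctan]
      rw [div_pow, one_pow, hsq]
      field_simp
      ring
    rw [h1]
    field_simp
  have hsin2pos : 0 < Real.sin (2 * vpi) := by rw [hsin2]; positivity
  -- complex coercion nonzero facts
  have hxiC : (xi : ℂ) ≠ 0 := Complex.ofReal_ne_zero.mpr hxi.ne'
  have hetaC : (eta : ℂ) ≠ 0 := Complex.ofReal_ne_zero.mpr heta.ne'
  have hQC : ((xi ^ 2 + eta ^ 2 : ℝ) : ℂ) ≠ 0 := Complex.ofReal_ne_zero.mpr hQ.ne'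
  have hs2C : ((Real.sin (2 * vpi) : ℝ) : ℂ) ≠ 0 := Complex.ofReal_ne_zero.mpr hsin2pos.ne'
  have hQq : ((xi:ℂ)) ^ 2 + ((eta:ℂ)) ^ 2 ≠ 0 := by exact_mod_cast hQC
  have h2v : (2 * (vpi:ℂ)) = ((2 * vpi : ℝ) : ℂ) := by push_cast; ring
  have hsin2C : Complex.sin (2 * (vpi:ℂ)) =
      2 * (xi:ℂ) * (eta:ℂ) / ((xi:ℂ) ^ 2 + (eta:ℂ) ^ 2) := by
    rw [h2v, ← Complex.ofReal_sin, hsin2]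
    push_cast
    ring
  have hcos2C : Complex.cos (2 * (vpi:ℂ)) =
      ((xi:ℂ) ^ 2 - (eta:ℂ) ^ 2) / ((xi:ℂ) ^ 2 + (eta:ℂ) ^ 2) := by
    rw [h2v, ← Complex.ofReal_cos, hcos2]
    push_cast
    ring
  have hs2Cne : Complex.sin (2 * (vpi:ℂ)) ≠ 0 := by
    rw [hsin2C]
    exact div_ne_zero (by simp [hxiC, hetaC]) hQq
  refine ⟨R, hRpos, fun ρ hρ0 hρR => ⟨?_, ?_⟩⟩
  · -- pole at c = I*vpi + I*(π/2)
    set c : ℂ := I * (vpi : ℂ) + I * ((π : ℂ) / 2) with hc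
    have hcim : c.im = vpi + π / 2 := by simp [hc]
    have him : ∀ z ∈ closedBall c R, |z.im - (vpi + π / 2)| ≤ R := by
      intro z hz
      have h1 : |(z - c).im| ≤ ‖z - c‖ := Complex.abs_im_le_norm _
      rw [← Complex.dist_eq] at h1
      have h2 := mem_closedBall.mp hz
      simp only [Complex.sub_im, hcim] at h1
      linarith
    -- nonvanishing of cosh (z + I vpi) on the ball
    have hcv : ∀ z ∈ closedBall c R, Complex.cosh (z + I * (vpi : ℂ)) ≠ 0 := by
      intro z hz hcon
      obtain ⟨j, hj⟩ := cosh_zero_char hcon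
      have hzim : z.im = (2 * j + 1) * (π / 2) - vpi := by
        have h3 := congrArg Complex.im hj
        simp only [Complex.add_im, Complex.mul_im, Complex.mul_re, Complex.I_re, Complex.I_im,
          Complex.ofReal_re, Complex.ofReal_im] at h3
        push_cast at h3 ⊢
        linarith
      have hb := him z hz
      rw [hzim] at hb
      have hb' : |(j:ℝ) * π - 2 * vpi| ≤ R := by
        have : (2 * (j:ℝ) + 1) * (π / 2) - vpi - (vpi + π / 2) = (j:ℝ) * π - 2 * vpi := by ring
        rwa [this] at hb
      rw [abs_le] at hb'
      rcases le_or_gt (j:ℝ) 0 with hj0 | hj0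
      · have : (j:ℝ) * π ≤ 0 := mul_nonpos_of_nonpos_of_nonneg hj0 hπ.le
        linarith [hb'.1]
      · have hj1 : (1:ℝ) ≤ (j:ℝ) := by exact_mod_cast hj0
        have : π ≤ (j:ℝ) * π := le_mul_of_one_le_left hπ.le hj1
        linarith [hb'.2]
    -- nonvanishing of sinh (z - I vpi) on the ball
    have hsu : ∀ z ∈ closedBall c R, Complex.sinh (z - I * (vpi : ℂ)) ≠ 0 := by
      intro z hz hcon
      obtain ⟨j, hj⟩ := sinh_zero_char hcon
      have hzim : z.im = (j:ℝ) * π + vpi := by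
        have h3 := congrArg Complex.im hj
        simp only [Complex.sub_im, Complex.add_im, Complex.neg_im, Complex.mul_im, Complex.mul_re,
          Complex.I_re, Complex.I_im, Complex.ofReal_re, Complex.ofReal_im] at h3
        push_cast at h3 ⊢
        linarith
      have hb := him z hz
      rw [hzim] at hb
      have hb' : |(j:ℝ) * π - π / 2| ≤ R := by
        have : (j:ℝ) * π + vpi - (vpi + π / 2) = (j:ℝ) * π - π / 2 := by ring
        rwa [this] at hb
      rw [abs_le] at hb'
      rcases le_or_gt (j:ℝ) 0 with hj0 | hj0
      · have : (j:ℝ) * π ≤ 0 := mul_nonpos_of_nonpos_of_nonneg hj0 hπ.le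
        linarith [hb'.1]
      · have hj1 : (1:ℝ) ≤ (j:ℝ) := by exact_mod_cast hj0
        have : π ≤ (j:ℝ) * π := le_mul_of_one_le_left hπ.le hj1
        linarith [hb'.2]
    -- nonvanishing of cosh (z - I vpi) away from center
    have hcu : ∀ z ∈ closedBall c R, z ≠ c → Complex.cosh (z - I * (vpi : ℂ)) ≠ 0 := by
      intro z hz hne hcon
      obtain ⟨j, hj⟩ := cosh_zero_char hcon
      have hzc : z - c = ((j * π : ℝ) : ℂ) * I := by
        have hz' : z = (((2 * j + 1) * (π / 2) : ℝ) : ℂ) * I + I * (vpi : ℂ) := by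
          rw [← hj]; ring
        rw [hz', hc]
        push_cast
        ring
      have hd : ‖z - c‖ ≤ R := by
        rw [← Complex.dist_eq]; exact mem_closedBall.mp hz
      rw [hzc] at hd
      have habs : |(j:ℝ) * π| ≤ R := by
        rwa [norm_mul, Complex.norm_I, mul_one, Complex.norm_real, Real.norm_eq_abs] at hd
      have hj0 : j = 0 := by
        by_contra hj0
        have h1 : (1:ℝ) ≤ |(j:ℝ)| := by exact_mod_cast Int.one_le_abs hj0
        rw [abs_mul, _root_.abs_of_nonneg hπ.le] at habs
        have h2 : π ≤ |(j:ℝ)| * π := le_mul_of_one_le_left hπ.le h1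
        linarith
      rw [hj0] at hzc
      simp at hzc
      exact hne (by rw [sub_eq_zero] at hzc; exact hzc)
    -- the holomorphic numerator
    set Qc : ℂ := ((xi ^ 2 + eta ^ 2 : ℝ) : ℂ) with hQcdef
    set Kc : ℂ := 4 * ((xi ^ 2 : ℝ) : ℂ) * ((eta ^ 2 : ℝ) : ℂ) / Qc with hKcdef
    set g : ℂ → ℂ := fun z => Complex.exp (I * alpha * z) *
        (lam ^ 4 * Complex.cosh (z - I * (vpi : ℂ)) +
          Qc ^ 2 * (Complex.cosh (z - I * (vpi : ℂ)) ^ 3 *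
            ((Complex.cosh (z + I * (vpi : ℂ)))⁻¹) ^ 2) -
          2 * lam ^ 2 * Qc * (Complex.cosh (z - I * (vpi : ℂ)) ^ 2 *
            (Complex.cosh (z + I * (vpi : ℂ)))⁻¹) +
          Kc * lam ^ 2 * (Complex.cosh (z + I * (vpi : ℂ)))⁻¹) with hgdef
    set U : Set ℂ := {z : ℂ | Complex.cosh (z + I * (vpi : ℂ)) ≠ 0} with hUdef
    have hUopen : IsOpen U := by
      have : U = (fun z => Complex.cosh (z + I * (vpi : ℂ))) ⁻¹' {(0:ℂ)}ᶜ := by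
        ext z; simp [hUdef]
      rw [this]
      exact isOpen_compl_singleton.preimage
        (Complex.continuous_cosh.comp (continuous_id.add continuous_const))
    have hUball : closedBall c R ⊆ U := fun z hz => hcv z hz
    have hgdiff : DifferentiableOn ℂ g U := by
      intro z hz
      apply DifferentiableAt.differentiableWithinAt
      have hvz : Complex.cosh (z + I * (vpi : ℂ)) ≠ 0 := hz
      have de : DifferentiableAt ℂ (fun z : ℂ => Complex.exp (I * alpha * z)) z :=
        (Complex.differentiable_exp.comp ((differentiable_id.const_mul (I * alpha)))).differentiableAt
      have du : DifferentiableAt ℂ (fun z : ℂ => Complex.cosh (z - I * (vpi : ℂ))) z :=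
        (Complex.differentiable_cosh.comp (differentiable_id.sub_const _)).differentiableAt
      have dv : DifferentiableAt ℂ (fun z : ℂ => Complex.cosh (z + I * (vpi : ℂ))) z :=
        (Complex.differentiable_cosh.comp (differentiable_id.add_const _)).differentiableAt
      have dvinv : DifferentiableAt ℂ (fun z : ℂ => (Complex.cosh (z + I * (vpi : ℂ)))⁻¹) z :=
        dv.inv hvz
      exact de.mul ((((du.const_mul _).add
        (((du.pow 3).mul (dvinv.pow 2)).const_mul _)).sub
        (((du.pow 2).mul dvinv).const_mul _)).add (dvinv.const_mul _))
    -- values at the center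
    have hA : Complex.cosh (c - I * (vpi : ℂ)) = 0 := by
      have e1 : c - I * (vpi : ℂ) = ((π / 2 : ℝ) : ℂ) * I := by rw [hc]; push_cast; ring
      rw [e1, Complex.cosh_mul_I, ← Complex.ofReal_cos, Real.cos_pi_div_two,
        Complex.ofReal_zero]
    have hA' : Complex.sinh (c - I * (vpi : ℂ)) = I := by
      have e1 : c - I * (vpi : ℂ) = ((π / 2 : ℝ) : ℂ) * I := by rw [hc]; push_cast; ring
      rw [e1, Complex.sinh_mul_I, ← Complex.ofReal_sin, Real.sin_pi_div_two,
        Complex.ofReal_one, one_mul]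
    have hB : Complex.cosh (c + I * (vpi : ℂ)) = -((Real.sin (2 * vpi) : ℝ) : ℂ) := by
      have e1 : c + I * (vpi : ℂ) = ((2 * vpi + π / 2 : ℝ) : ℂ) * I := by
        rw [hc]; push_cast; ring
      rw [e1, Complex.cosh_mul_I, ← Complex.ofReal_cos, Real.cos_add_pi_div_two,
        Complex.ofReal_neg]
    have hB' : Complex.sinh (c + I * (vpi : ℂ)) = ((Real.cos (2 * vpi) : ℝ) : ℂ) * I := by
      have e1 : c + I * (vpi : ℂ) = ((2 * vpi + π / 2 : ℝ) : ℂ) * I := by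
        rw [hc]; push_cast; ring
      rw [e1, Complex.sinh_mul_I, ← Complex.ofReal_sin, Real.sin_add_pi_div_two]
    have hBne : Complex.cosh (c + I * (vpi : ℂ)) ≠ 0 := by
      rw [hB]; exact neg_ne_zero.mpr hs2C
    -- derivative at the center
    have hUd : HasDerivAt (fun z : ℂ => Complex.cosh (z - I * (vpi : ℂ)))
        (Complex.sinh (c - I * (vpi : ℂ))) c := by
      simpa [Function.comp_def] using (Complex.hasDerivAt_cosh (c - I * (vpi : ℂ))).comp c
        ((hasDerivAt_id c).sub_const _)
    have hVd : HasDerivAt (fun z : ℂ => Complex.cosh (z + I * (vpi : ℂ)))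
        (Complex.sinh (c + I * (vpi : ℂ))) c := by
      simpa [Function.comp_def] using (Complex.hasDerivAt_cosh (c + I * (vpi : ℂ))).comp c
        ((hasDerivAt_id c).add_const _)
    have hVinv := hVd.inv hBne
    have hEd : HasDerivAt (fun z : ℂ => Complex.exp (I * alpha * z))
        (Complex.exp (I * alpha * c) * (I * alpha)) c := by
      have h0 : HasDerivAt (fun z : ℂ => I * alpha * z) (I * alpha) c := by
        simpa using (hasDerivAt_id c).const_mul (I * alpha)
      exact (Complex.hasDerivAt_exp (I * alpha * c)).comp c h0
    have hgd := hEd.mul ((((hUd.const_mul (lam ^ 4)).add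
        (((hUd.pow 3).mul (hVinv.pow 2)).const_mul (Qc ^ 2))).sub
        (((hUd.pow 2).mul hVinv).const_mul (2 * lam ^ 2 * Qc))).add
        (hVinv.const_mul (Kc * lam ^ 2)))
    have hres : deriv g c = 0 := by
      have hgd2 : HasDerivAt g _ c := hgd
      rw [hgd2.deriv]
      obtain ⟨E, hEeq, hEne⟩ : ∃ E : ℂ, Complex.exp (I * alpha * c) = E ∧ E ≠ 0 :=
        ⟨_, rfl, Complex.exp_ne_zero _⟩
      rw [hEeq, hA, hA', hB, hB', halpha, hKcdef]
      field_simp [hEne, hs2Cne, hQC, hxiC, hetaC]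
      simp only [Pi.add_apply, Pi.sub_apply, Pi.mul_apply, Pi.pow_apply, Pi.inv_apply, hA, hB,
        hsin2, hcos2, hQcdef]
      push_cast
      field_simp [hxiC, hetaC, hQq]
      ring
    -- apply the key lemma
    have hkey := key_lemma c (I * (vpi : ℂ)) R hRpos U hUopen hUball g hgdiff hres hA
      hsu hcu ρ hρ0 hρR
    have hcongr : circleIntegral h c ρ =
        circleIntegral (fun z => g z * ((Complex.cosh (z - I * (vpi : ℂ)))⁻¹) ^ 2) c ρ := by
      apply circleIntegral.integral_congr hρ0.le
      intro z hz
      have hzb : z ∈ closedBall c R :=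
        (closedBall_subset_closedBall hρR.le) (sphere_subset_closedBall hz)
      have hzne : z ≠ c := by
        intro hzeq
        rw [hzeq] at hz
        simp [mem_sphere_iff_norm] at hz
        exact hρ0.ne' hz.symm
      have hu : Complex.cosh (z - I * (vpi : ℂ)) ≠ 0 := hcu z hzb hzne
      have hv : Complex.cosh (z + I * (vpi : ℂ)) ≠ 0 := hcv z hzb
      rw [hh z, hgdef]
      field_simp [hu, hv, hQC]
    rw [hcongr]
    exact hkey
  · -- pole at c = -(I*vpi) + I*(π/2)
    set c : ℂ := -(I * (vpi : ℂ)) + I * ((π : ℂ) / 2) with hc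
    have hcim : c.im = -vpi + π / 2 := by simp [hc]
    have him : ∀ z ∈ closedBall c R, |z.im - (-vpi + π / 2)| ≤ R := by
      intro z hz
      have h1 : |(z - c).im| ≤ ‖z - c‖ := Complex.abs_im_le_norm _
      rw [← Complex.dist_eq] at h1
      have h2 := mem_closedBall.mp hz
      simp only [Complex.sub_im, hcim] at h1
      linarith
    -- nonvanishing of cosh (z - I vpi) on the ball
    have hcv : ∀ z ∈ closedBall c R, Complex.cosh (z - I * (vpi : ℂ)) ≠ 0 := by
      intro z hz hcon
      obtain ⟨j, hj⟩ := cosh_zero_char hcon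
      have hzim : z.im = (2 * j + 1) * (π / 2) + vpi := by
        have h3 := congrArg Complex.im hj
        simp only [Complex.sub_im, Complex.add_im, Complex.neg_im, Complex.mul_im, Complex.mul_re,
          Complex.I_re, Complex.I_im, Complex.ofReal_re, Complex.ofReal_im] at h3
        push_cast at h3 ⊢
        linarith
      have hb := him z hz
      rw [hzim] at hb
      have hb' : |(j:ℝ) * π + 2 * vpi| ≤ R := by
        have : (2 * (j:ℝ) + 1) * (π / 2) + vpi - (-vpi + π / 2) = (j:ℝ) * π + 2 * vpi := by
          ring
        rwa [this] at hb
      rw [abs_le] at hb'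
      rcases le_or_gt 0 (j:ℝ) with hj0 | hj0
      · have : 0 ≤ (j:ℝ) * π := mul_nonneg hj0 hπ.le
        linarith [hb'.2]
      · have hj1 : (j:ℝ) ≤ -1 := by
          have : (j:ℤ) < 0 := by exact_mod_cast hj0
          exact_mod_cast Int.cast_le.mpr (by omega : (j:ℤ) ≤ -1)
        have : (j:ℝ) * π ≤ -π := by nlinarith
        linarith [hb'.1]
    -- nonvanishing of sinh (z + I vpi) on the ball
    have hsu : ∀ z ∈ closedBall c R, Complex.sinh (z - -(I * (vpi : ℂ))) ≠ 0 := by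
      intro z hz hcon
      obtain ⟨j, hj⟩ := sinh_zero_char hcon
      have hzim : z.im = (j:ℝ) * π - vpi := by
        have h3 := congrArg Complex.im hj
        simp only [Complex.sub_im, Complex.add_im, Complex.neg_im, Complex.mul_im, Complex.mul_re,
          Complex.I_re, Complex.I_im, Complex.ofReal_re, Complex.ofReal_im] at h3
        push_cast at h3 ⊢
        linarith
      have hb := him z hz
      rw [hzim] at hb
      have hb' : |(j:ℝ) * π - π / 2| ≤ R := by
        have : (j:ℝ) * π - vpi - (-vpi + π / 2) = (j:ℝ) * π - π / 2 := by ring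
        rwa [this] at hb
      rw [abs_le] at hb'
      rcases le_or_gt (j:ℝ) 0 with hj0 | hj0
      · have : (j:ℝ) * π ≤ 0 := mul_nonpos_of_nonpos_of_nonneg hj0 hπ.le
        linarith [hb'.1]
      · have hj1 : (1:ℝ) ≤ (j:ℝ) := by exact_mod_cast hj0
        have : π ≤ (j:ℝ) * π := le_mul_of_one_le_left hπ.le hj1
        linarith [hb'.2]
    -- nonvanishing of cosh (z + I vpi) away from center
    have hcu : ∀ z ∈ closedBall c R, z ≠ c → Complex.cosh (z - -(I * (vpi : ℂ))) ≠ 0 := by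
      intro z hz hne hcon
      obtain ⟨j, hj⟩ := cosh_zero_char hcon
      have hzc : z - c = ((j * π : ℝ) : ℂ) * I := by
        have hz' : z = (((2 * j + 1) * (π / 2) : ℝ) : ℂ) * I - I * (vpi : ℂ) := by
          rw [← hj]; ring
        rw [hz', hc]
        push_cast
        ring
      have hd : ‖z - c‖ ≤ R := by
        rw [← Complex.dist_eq]; exact mem_closedBall.mp hz
      rw [hzc] at hd
      have habs : |(j:ℝ) * π| ≤ R := by
        rwa [norm_mul, Complex.norm_I, mul_one, Complex.norm_real, Real.norm_eq_abs] at hd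
      have hj0 : j = 0 := by
        by_contra hj0
        have h1 : (1:ℝ) ≤ |(j:ℝ)| := by exact_mod_cast Int.one_le_abs hj0
        rw [abs_mul, _root_.abs_of_nonneg hπ.le] at habs
        have h2 : π ≤ |(j:ℝ)| * π := le_mul_of_one_le_left hπ.le h1
        linarith
      rw [hj0] at hzc
      simp at hzc
      exact hne (by rw [sub_eq_zero] at hzc; exact hzc)
    -- the holomorphic numerator
    set Qc : ℂ := ((xi ^ 2 + eta ^ 2 : ℝ) : ℂ) with hQcdef
    set Kc : ℂ := 4 * ((xi ^ 2 : ℝ) : ℂ) * ((eta ^ 2 : ℝ) : ℂ) / Qc with hKcdef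
    set g : ℂ → ℂ := fun z => Complex.exp (I * alpha * z) *
        (lam ^ 4 * (Complex.cosh (z + I * (vpi : ℂ)) ^ 2 *
            (Complex.cosh (z - I * (vpi : ℂ)))⁻¹) +
          Qc ^ 2 * Complex.cosh (z - I * (vpi : ℂ)) -
          2 * lam ^ 2 * Qc * Complex.cosh (z + I * (vpi : ℂ)) +
          Kc * lam ^ 2 * (Complex.cosh (z + I * (vpi : ℂ)) *
            ((Complex.cosh (z - I * (vpi : ℂ)))⁻¹) ^ 2)) with hgdef
    set U : Set ℂ := {z : ℂ | Complex.cosh (z - I * (vpi : ℂ)) ≠ 0} with hUdef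
    have hUopen : IsOpen U := by
      have : U = (fun z => Complex.cosh (z - I * (vpi : ℂ))) ⁻¹' {(0:ℂ)}ᶜ := by
        ext z; simp [hUdef]
      rw [this]
      exact isOpen_compl_singleton.preimage
        (Complex.continuous_cosh.comp (continuous_id.sub continuous_const))
    have hUball : closedBall c R ⊆ U := fun z hz => hcv z hz
    have hgdiff : DifferentiableOn ℂ g U := by
      intro z hz
      apply DifferentiableAt.differentiableWithinAt
      have hvz : Complex.cosh (z - I * (vpi : ℂ)) ≠ 0 := hz
      have de : DifferentiableAt ℂ (fun z : ℂ => Complex.exp (I * alpha * z)) z :=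
        (Complex.differentiable_exp.comp ((differentiable_id.const_mul (I * alpha)))).differentiableAt
      have du : DifferentiableAt ℂ (fun z : ℂ => Complex.cosh (z - I * (vpi : ℂ))) z :=
        (Complex.differentiable_cosh.comp (differentiable_id.sub_const _)).differentiableAt
      have dv : DifferentiableAt ℂ (fun z : ℂ => Complex.cosh (z + I * (vpi : ℂ))) z :=
        (Complex.differentiable_cosh.comp (differentiable_id.add_const _)).differentiableAt
      have duinv : DifferentiableAt ℂ (fun z : ℂ => (Complex.cosh (z - I * (vpi : ℂ)))⁻¹) z :=
        du.inv hvz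
      exact de.mul (((((dv.pow 2).mul duinv).const_mul _).add
        (du.const_mul _)).sub (dv.const_mul _) |>.add
        ((dv.mul (duinv.pow 2)).const_mul _))
    -- values at the center
    have hA : Complex.cosh (c + I * (vpi : ℂ)) = 0 := by
      have e1 : c + I * (vpi : ℂ) = ((π / 2 : ℝ) : ℂ) * I := by rw [hc]; push_cast; ring
      rw [e1, Complex.cosh_mul_I, ← Complex.ofReal_cos, Real.cos_pi_div_two,
        Complex.ofReal_zero]
    have hA' : Complex.sinh (c + I * (vpi : ℂ)) = I := by
      have e1 : c + I * (vpi : ℂ) = ((π / 2 : ℝ) : ℂ) * I := by rw [hc]; push_cast; ring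
      rw [e1, Complex.sinh_mul_I, ← Complex.ofReal_sin, Real.sin_pi_div_two,
        Complex.ofReal_one, one_mul]
    have hB : Complex.cosh (c - I * (vpi : ℂ)) = ((Real.sin (2 * vpi) : ℝ) : ℂ) := by
      have e1 : c - I * (vpi : ℂ) = ((π / 2 - 2 * vpi : ℝ) : ℂ) * I := by
        rw [hc]; push_cast; ring
      rw [e1, Complex.cosh_mul_I, ← Complex.ofReal_cos, Real.cos_pi_div_two_sub]
    have hB' : Complex.sinh (c - I * (vpi : ℂ)) = ((Real.cos (2 * vpi) : ℝ) : ℂ) * I := by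
      have e1 : c - I * (vpi : ℂ) = ((π / 2 - 2 * vpi : ℝ) : ℂ) * I := by
        rw [hc]; push_cast; ring
      rw [e1, Complex.sinh_mul_I, ← Complex.ofReal_sin, Real.sin_pi_div_two_sub]
    have hBne : Complex.cosh (c - I * (vpi : ℂ)) ≠ 0 := by
      rw [hB]; exact hs2C
    -- derivative at the center
    have hUd : HasDerivAt (fun z : ℂ => Complex.cosh (z - I * (vpi : ℂ)))
        (Complex.sinh (c - I * (vpi : ℂ))) c := by
      simpa [Function.comp_def] using (Complex.hasDerivAt_cosh (c - I * (vpi : ℂ))).comp c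
        ((hasDerivAt_id c).sub_const _)
    have hVd : HasDerivAt (fun z : ℂ => Complex.cosh (z + I * (vpi : ℂ)))
        (Complex.sinh (c + I * (vpi : ℂ))) c := by
      simpa [Function.comp_def] using (Complex.hasDerivAt_cosh (c + I * (vpi : ℂ))).comp c
        ((hasDerivAt_id c).add_const _)
    have hUinv := hUd.inv hBne
    have hEd : HasDerivAt (fun z : ℂ => Complex.exp (I * alpha * z))
        (Complex.exp (I * alpha * c) * (I * alpha)) c := by
      have h0 : HasDerivAt (fun z : ℂ => I * alpha * z) (I * alpha) c := by
        simpa using (hasDerivAt_id c).const_mul (I * alpha)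
      exact (Complex.hasDerivAt_exp (I * alpha * c)).comp c h0
    have hgd := hEd.mul (((((hVd.pow 2).mul hUinv).const_mul (lam ^ 4)).add
        (hUd.const_mul (Qc ^ 2))).sub (hVd.const_mul (2 * lam ^ 2 * Qc)) |>.add
        ((hVd.mul (hUinv.pow 2)).const_mul (Kc * lam ^ 2)))
    have hres : deriv g c = 0 := by
      have hgd2 : HasDerivAt g _ c := hgd
      rw [hgd2.deriv]
      obtain ⟨E, hEeq, hEne⟩ : ∃ E : ℂ, Complex.exp (I * alpha * c) = E ∧ E ≠ 0 :=
        ⟨_, rfl, Complex.exp_ne_zero _⟩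
      rw [hEeq, hA, hA', hB, hB', halpha, hKcdef]
      field_simp [hEne, hs2Cne, hQC, hxiC, hetaC]
      simp only [Pi.add_apply, Pi.sub_apply, Pi.mul_apply, Pi.pow_apply, Pi.inv_apply, hA, hB,
        hsin2, hcos2, hQcdef]
      push_cast
      field_simp [hxiC, hetaC, hQq]
      ring
    -- apply the key lemma
    have hkey := key_lemma c (-(I * (vpi : ℂ))) R hRpos U hUopen hUball g hgdiff hres
      (by rw [sub_neg_eq_add]; exact hA) hsu hcu ρ hρ0 hρR
    have hcongr : circleIntegral h c ρ =
        circleIntegral (fun z => g z * ((Complex.cosh (z - -(I * (vpi : ℂ))))⁻¹) ^ 2) c ρ := by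
      apply circleIntegral.integral_congr hρ0.le
      intro z hz
      have hzb : z ∈ closedBall c R :=
        (closedBall_subset_closedBall hρR.le) (sphere_subset_closedBall hz)
      have hzne : z ≠ c := by
        intro hzeq
        rw [hzeq] at hz
        simp [mem_sphere_iff_norm] at hz
        exact hρ0.ne' hz.symm
      have hv : Complex.cosh (z + I * (vpi : ℂ)) ≠ 0 := by
        have := hcu z hzb hzne
        rwa [sub_neg_eq_add] at this
      have hu : Complex.cosh (z - I * (vpi : ℂ)) ≠ 0 := hcv z hzb
      rw [hh z, hgdef]
      simp only [sub_neg_eq_add]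
      field_simp [hu, hv, hQC]
    rw [hcongr]
    exact hkey
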